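/- Let f : ℝ → ℝ be continuously differentiable with f′(t) ≠ 0 for all t ∈ ℝ, let h > 0, and let F_h(θ, ψ) = (θ − h f′(θψ)ψ, ψ + h f′(θψ)θ) be the simultaneous gradient descent update operator for the Dirac-GAN. Then the Jacobian matrix of F_h at the Nash equilibrium (0, 0) has the two complex eigenvalues 1 ± h f′(0)·i, each of absolute value √(1 + h² f′(0)²) > 1. -/

import Mathlib

open Matrix

/-- For the Dirac-GAN, the Jacobian at the Nash equilibrium `(0,0)` of the simultaneous
gradient descent operator `F_h(θ, ψ) = (θ − h f′(θψ)ψ, ψ + h f′(θψ)θ)` is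
`[[1, −h f′(0)], [h f′(0), 1]]`; its complex eigenvalues are `1 ± h f′(0)·i`, each of
absolute value `√(1 + h² f′(0)²) > 1`. -/
theorem dirac_gan_simgd_jacobian_eigenvalues
    (f : ℝ → ℝ) (hf : ContDiff ℝ 1 f) (hf' : ∀ t : ℝ, deriv f t ≠ 0)
    (h : ℝ) (hh : 0 < h)
    (F : (Fin 2 → ℝ) → (Fin 2 → ℝ))
    (hF : ∀ x : Fin 2 → ℝ,
      F x = ![x 0 - h * deriv f (x 0 * x 1) * x 1, x 1 + h * deriv f (x 0 * x 1) * x 0]) :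
    HasFDerivAt F
      (LinearMap.toContinuousLinearMap
        (Matrix.toLin'
          (!![1, -(h * deriv f 0); h * deriv f 0, 1] : Matrix (Fin 2) (Fin 2) ℝ)))
      0 ∧
    spectrum ℂ
        ((!![1, -(h * deriv f 0); h * deriv f 0, 1] : Matrix (Fin 2) (Fin 2) ℝ).map
          Complex.ofReal)
      = {1 + Complex.ofReal (h * deriv f 0) * Complex.I,
         1 - Complex.ofReal (h * deriv f 0) * Complex.I} ∧
    (∀ lam ∈ spectrum ℂ
        ((!![1, -(h * deriv f 0); h * deriv f 0, 1] : Matrix (Fin 2) (Fin 2) ℝ).map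
          Complex.ofReal),
      ‖lam‖ = Real.sqrt (1 + h ^ 2 * deriv f 0 ^ 2)) ∧
    1 < Real.sqrt (1 + h ^ 2 * deriv f 0 ^ 2) := by
  set g : ℝ → ℝ := deriv f with hg
  set c : ℝ := h * g 0 with hc
  have hgc : Continuous g := hf.continuous_deriv le_rfl
  -- the derivative claim
  have part1 : HasFDerivAt F
      (LinearMap.toContinuousLinearMap (Matrix.toLin'
        (!![1, -c; c, 1] : Matrix (Fin 2) (Fin 2) ℝ))) 0 := by
    rw [hasFDerivAt_iff_isLittleO_nhds_zero]
    set k : (Fin 2 → ℝ) → ℝ := fun y => h * (g (y 0 * y 1) - g 0) with hk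
    have heq : (fun y : Fin 2 → ℝ => F (0 + y) - F 0 -
        (LinearMap.toContinuousLinearMap (Matrix.toLin'
          (!![1, -c; c, 1] : Matrix (Fin 2) (Fin 2) ℝ))) y)
        = fun y => ![-(k y) * y 1, k y * y 0] := by
      funext y
      have h0 : F 0 = ![0, 0] := by rw [hF]; norm_num
      rw [hF, h0]
      funext i
      fin_cases i <;>
        simp [Matrix.toLin'_apply, Matrix.mulVec, dotProduct, Fin.sum_univ_two,
          hk, hc] <;>
        ring
    rw [heq, Asymptotics.isLittleO_iff]
    intro ε hε
    have hkc : Filter.Tendsto k (nhds 0) (nhds 0) := by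
      have hcont : Continuous k := continuous_const.mul
        ((hgc.comp ((continuous_apply 0).mul (continuous_apply 1))).sub continuous_const)
      have h0 : k 0 = 0 := by simp [hk]
      simpa [h0] using hcont.tendsto 0
    have hev : ∀ᶠ y : Fin 2 → ℝ in nhds 0, |k y| ≤ ε := by
      have := hkc (Metric.closedBall_mem_nhds (0:ℝ) hε)
      filter_upwards [this] with y hy
      simpa [Real.dist_eq] using hy
    filter_upwards [hev] with y hy
    rw [pi_norm_le_iff_of_nonneg (by positivity)]
    intro i
    fin_cases i <;>
      · simp [Real.norm_eq_abs, abs_mul]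
        first
        | exact mul_le_mul hy (norm_le_pi_norm y 1) (abs_nonneg _) hε.le
        | exact mul_le_mul hy (norm_le_pi_norm y 0) (abs_nonneg _) hε.le
  -- the spectrum computation
  have part2 : spectrum ℂ
      ((!![1, -c; c, 1] : Matrix (Fin 2) (Fin 2) ℝ).map Complex.ofReal)
      = {1 + (c:ℂ) * Complex.I, 1 - (c:ℂ) * Complex.I} := by
    ext μ
    rw [spectrum.mem_iff, Matrix.isUnit_iff_isUnit_det]
    have hdet : ((algebraMap ℂ (Matrix (Fin 2) (Fin 2) ℂ)) μ -
        (!![1, -c; c, 1] : Matrix (Fin 2) (Fin 2) ℝ).map Complex.ofReal).det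
        = (μ - (1 + (c:ℂ) * Complex.I)) * (μ - (1 - (c:ℂ) * Complex.I)) := by
      simp [Matrix.det_fin_two, Matrix.algebraMap_matrix_apply, Matrix.map_apply]
      ring_nf
      simp [Complex.I_sq]
    rw [hdet]
    simp only [isUnit_iff_ne_zero, not_not, mul_eq_zero, sub_eq_zero, Set.mem_insert_iff,
      Set.mem_singleton_iff]
  -- the common absolute value
  have habs : ∀ lam ∈ spectrum ℂ
      ((!![1, -c; c, 1] : Matrix (Fin 2) (Fin 2) ℝ).map Complex.ofReal),
      ‖lam‖ = Real.sqrt (1 + h ^ 2 * g 0 ^ 2) := by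
    intro lam hlam
    rw [part2] at hlam
    have hcsq : c ^ 2 = h ^ 2 * g 0 ^ 2 := by rw [hc]; ring
    rcases hlam with hlam | hlam <;>
      · rw [hlam, Complex.norm_def, Complex.normSq_apply]
        simp
        rw [← hcsq]
        ring_nf
  have hd0 : g 0 ≠ 0 := hf' 0
  have hsq : (0:ℝ) < h ^ 2 * g 0 ^ 2 := by positivity
  have part4 : 1 < Real.sqrt (1 + h ^ 2 * g 0 ^ 2) := by
    rw [show (1:ℝ) < Real.sqrt (1 + h ^ 2 * g 0 ^ 2) ↔ (1:ℝ)^2 < 1 + h ^ 2 * g 0 ^ 2 from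
      Real.lt_sqrt zero_le_one]
    nlinarith
  exact ⟨part1, part2, habs, part4⟩
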